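/- Let O be a complete discrete valuation ring with uniformizer π, and C^• a cochain complex of flat, separated, π-adically complete O-modules. If ω ∈ C^i satisfies ∂(ω) = 0 and its reduction ω̄ ∈ C̄^i satisfies ω̄ = ∂̄(η) for some η ∈ C̄^{i-1}, then there exists ξ ∈ C^{i-1} with ∂(ξ) = ω and ξ̄ = η. -/

import Mathlib

/-- Let `O` be a complete discrete valuation ring with uniformizer `π`, and let
`(C^•, d)` be a cochain complex of flat, separated, π-adically complete `O`-modules,
with `H^{i+1}(C̄^•) = 0` for the mod-π reduction `C̄^•` (the setting of the previous
lifting proposition).  If `ω ∈ C^{i+1}` satisfies `dω = 0` and its reduction is a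
coboundary, `ω̄ = d̄ η̄` (i.e. `ω - dη ∈ πC^{i+1}`), then there exists `ξ ∈ C^i` with
`dξ = ω` and `ξ̄ = η̄` (i.e. `ξ - η ∈ πC^i`). -/
theorem stmt4
    (O : Type) [CommRing O] [IsDomain O] [IsDiscreteValuationRing O]
    (π : O) (hπ : Irreducible π)
    [IsAdicComplete (Ideal.span {π}) O]
    (C : ℤ → Type) [∀ i, AddCommGroup (C i)] [∀ i, Module O (C i)]
    (d : ∀ i, C i →ₗ[O] C (i + 1))
    (hdd : ∀ i (x : C i), d (i + 1) (d i x) = 0)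
    (hflat : ∀ i (x : C i), π • x = 0 → x = 0)
    [∀ i, IsAdicComplete (Ideal.span {π}) (C i)]
    (i : ℤ)
    (hHbar : ∀ ω : C (i + 1), (∃ z, d (i + 1) ω = π • z) →
      ∃ (η : C i) (ξ : C (i + 1)), ω = d i η + π • ξ)
    (ω : C (i + 1)) (hω : d (i + 1) ω = 0)
    (η : C i) (hη : ∃ ζ : C (i + 1), ω - d i η = π • ζ) :
    ∃ ξ : C i, d i ξ = ω ∧ ∃ ζ : C i, ξ - η = π • ζ := by
  -- flatness for powers of π
  have hflatpow : ∀ (n : ℕ) (j : ℤ) (x : C j), π ^ n • x = 0 → x = 0 := by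
    intro n
    induction n with
    | zero => intro j x h; simpa using h
    | succ n ih =>
      intro j x h
      apply ih j x
      apply hflat j
      rw [← mul_smul, ← pow_succ']
      exact h
  -- membership in (span {π})^n • ⊤
  have hmem : ∀ (j : ℤ) (n : ℕ) (x : C j),
      x ∈ (Ideal.span {π} ^ n • ⊤ : Submodule O (C j)) ↔ ∃ y, x = π ^ n • y := by
    intro j n x
    rw [Ideal.span_singleton_pow, Submodule.ideal_span_singleton_smul,
      ← SetLike.mem_coe, Submodule.coe_pointwise_smul]
    constructor
    · intro h
      rcases Set.mem_smul_set.mp h with ⟨y, -, hy⟩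
      exact ⟨y, hy.symm⟩
    · rintro ⟨y, rfl⟩
      exact Set.mem_smul_set.mpr ⟨y, trivial, rfl⟩
  obtain ⟨ζ₀, hζ₀⟩ := hη
  -- the inductive improvement step
  have step : ∀ (n : ℕ) (s : C i) (ζ : C (i + 1)), ω - d i s = π ^ (n + 1) • ζ →
      ∃ (s' : C i) (ζ' : C (i + 1)),
        (∃ y, s' - s = π ^ (n + 1) • y) ∧ ω - d i s' = π ^ (n + 2) • ζ' := by
    intro n s ζ h
    have hdζ : d (i + 1) ζ = 0 := by
      apply hflatpow (n + 1) (i + 1 + 1)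
      rw [← map_smul, ← h, map_sub, hω, hdd, sub_zero]
    obtain ⟨η', ξ', hζ'⟩ := hHbar ζ ⟨0, by simp [hdζ]⟩
    refine ⟨s + π ^ (n + 1) • η', ξ', ⟨η', by abel⟩, ?_⟩
    have : ω - d i (s + π ^ (n + 1) • η') = π ^ (n + 1) • (ζ - d i η') := by
      rw [map_add, map_smul, smul_sub, ← h]; abel
    rw [this]
    have hzd : ζ - d i η' = π • ξ' := by rw [hζ']; abel
    rw [hzd, ← mul_smul, ← pow_succ]
  choose s' ζ' hdiff hinv using step
  -- the approximating sequence
  let T : ℕ → Type := fun n => {p : C i × C (i + 1) // ω - d i p.1 = π ^ (n + 1) • p.2}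
  let seq : ∀ n, T n := fun n => Nat.rec
    (⟨(η, ζ₀), by simpa using hζ₀⟩ : T 0)
    (fun n p => ⟨(s' n p.1.1 p.1.2 p.2, ζ' n p.1.1 p.1.2 p.2), hinv n p.1.1 p.1.2 p.2⟩) n
  set f : ℕ → C i := fun n => (seq n).1.1 with hf
  have hstep : ∀ n, ∃ y, f (n + 1) - f n = π ^ (n + 1) • y := fun n =>
    hdiff n (seq n).1.1 (seq n).1.2 (seq n).2
  have hfinv : ∀ n, ω - d i (f n) = π ^ (n + 1) • (seq n).1.2 := fun n => (seq n).2
  have hf0 : f 0 = η := rfl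
  -- Cauchy property
  have hcauchy : ∀ m n, m ≤ n → ∃ y, f n - f m = π ^ (m + 1) • y := by
    intro m n hmn
    induction n, hmn using Nat.le_induction with
    | base => exact ⟨0, by simp⟩
    | succ n hmn ih =>
      obtain ⟨y₁, hy₁⟩ := ih
      obtain ⟨y₂, hy₂⟩ := hstep n
      refine ⟨π ^ (n - m) • y₂ + y₁, ?_⟩
      have hpow : π ^ (n + 1) = π ^ (m + 1) * π ^ (n - m) := by
        rw [← pow_add]; congr 1; omega
      have : f (n + 1) - f m = (f (n + 1) - f n) + (f n - f m) := by abel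
      rw [this, hy₁, hy₂, hpow, smul_add, mul_smul]
  -- shifted sequence for precompleteness
  set g : ℕ → C i := fun n => f (n - 1) with hg
  have hgcompat : ∀ {m n : ℕ}, m ≤ n →
      g m ≡ g n [SMOD (Ideal.span {π} ^ m • ⊤ : Submodule O (C i))] := by
    intro m n hmn
    rcases Nat.eq_zero_or_pos m with rfl | hm
    · rw [SModEq.sub_mem]; simp
    · rw [SModEq.sub_mem, hmem]
      obtain ⟨y, hy⟩ := hcauchy (m - 1) (n - 1) (by omega)
      rw [show m - 1 + 1 = m from by omega] at hy
      refine ⟨-y, ?_⟩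
      have hgeq : g m - g n = -(f (n - 1) - f (m - 1)) := by simp only [hg]; abel
      rw [hgeq, hy, smul_neg]
  obtain ⟨L, hL⟩ := IsPrecomplete.prec
    (IsAdicComplete.toIsPrecomplete (I := Ideal.span {π}) (M := C i)) @hgcompat
  have hLmem : ∀ n, ∃ y, L - f n = π ^ (n + 1) • y := by
    intro n
    have := (SModEq.sub_mem.mp (hL (n + 1)))
    rw [hmem] at this
    obtain ⟨y, hy⟩ := this
    refine ⟨-y, ?_⟩
    have hgeq : L - f n = -(g (n + 1) - L) := by simp only [hg, Nat.add_sub_cancel]; abel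
    rw [hgeq, hy, smul_neg]
  refine ⟨L, ?_, ?_⟩
  · -- d L = ω via separatedness
    have : ∀ n : ℕ, d i L - ω ∈ (Ideal.span {π} ^ n • ⊤ : Submodule O (C (i + 1))) := by
      intro n
      rcases Nat.eq_zero_or_pos n with rfl | hn
      · simp
      · obtain ⟨k, rfl⟩ : ∃ k, n = k + 1 := ⟨n - 1, by omega⟩
        rw [hmem]
        obtain ⟨y, hy⟩ := hLmem k
        have h2 := hfinv k
        refine ⟨d i y - (seq k).1.2, ?_⟩
        have hsplit : d i L - ω = d i (L - f k) - (ω - d i (f k)) := by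
          rw [map_sub]; abel
        rw [hsplit, hy, h2, map_smul, smul_sub]
    have := IsHausdorff.haus
      (IsAdicComplete.toIsHausdorff (I := Ideal.span {π}) (M := C (i + 1)))
      (d i L - ω) (fun n => SModEq.zero.mpr (this n))
    exact sub_eq_zero.mp this
  · obtain ⟨y, hy⟩ := hLmem 0
    exact ⟨y, by rw [← hf0, hy]; simp⟩
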